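/- There exists ν₊ > 0 such that for every ν ∈ (0, ν₊] and every point (x, y, z) ∈ C_ν^{ct+} := [√ν/2, √(2ν)] × [−ν^{3/2}, ν^{3/2}] × [−ν^{3/2}, ν^{3/2}]: if y = ν^{3/2} then the second component of G_ν(x, y, z) is strictly positive, and if y = −ν^{3/2} then the second component of G_ν(x, y, z) is strictly negative; the analogous statements hold on C_ν^{ct−} := [−√(2ν), −√ν/2] × [−ν^{3/2}, ν^{3/2}] × [−ν^{3/2}, ν^{3/2}]. -/

import Mathlib

open Set

/-- The vector field in `ℝ³`:
`G_ν(x,y,z) = (x(ν − x²) + x³(y+z) + x(y²+z²) + yz, y + x²(y+z) + x⁴ + yz, −z + x²(y+z) + x⁴ + yz)`. -/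
noncomputable def G (ν : ℝ) (p : ℝ × ℝ × ℝ) : ℝ × ℝ × ℝ :=
  (p.1 * (ν - p.1 ^ 2) + p.1 ^ 3 * (p.2.1 + p.2.2) + p.1 * (p.2.1 ^ 2 + p.2.2 ^ 2)
      + p.2.1 * p.2.2,
   p.2.1 + p.1 ^ 2 * (p.2.1 + p.2.2) + p.1 ^ 4 + p.2.1 * p.2.2,
   -p.2.2 + p.1 ^ 2 * (p.2.1 + p.2.2) + p.1 ^ 4 + p.2.1 * p.2.2)

/-- The box `S_θ = [−√(2θ), √(2θ)] × [−θ^{3/2}, θ^{3/2}] × [−θ^{3/2}, θ^{3/2}]`. -/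
noncomputable def S (θ : ℝ) : Set (ℝ × ℝ × ℝ) :=
  Icc (-Real.sqrt (2 * θ)) (Real.sqrt (2 * θ)) ×ˢ
    (Icc (-θ ^ ((3 : ℝ) / 2)) (θ ^ ((3 : ℝ) / 2)) ×ˢ
      Icc (-θ ^ ((3 : ℝ) / 2)) (θ ^ ((3 : ℝ) / 2)))

/-- The box `C_ν^{ct+} = [√ν/2, √(2ν)] × [−ν^{3/2}, ν^{3/2}]²`. -/
noncomputable def Cctp (ν : ℝ) : Set (ℝ × ℝ × ℝ) :=
  Icc (Real.sqrt ν / 2) (Real.sqrt (2 * ν)) ×ˢ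
    (Icc (-ν ^ ((3 : ℝ) / 2)) (ν ^ ((3 : ℝ) / 2)) ×ˢ
      Icc (-ν ^ ((3 : ℝ) / 2)) (ν ^ ((3 : ℝ) / 2)))

/-- The box `C_ν^{ct−} = [−√(2ν), −√ν/2] × [−ν^{3/2}, ν^{3/2}]²`. -/
noncomputable def Cctm (ν : ℝ) : Set (ℝ × ℝ × ℝ) :=
  Icc (-Real.sqrt (2 * ν)) (-(Real.sqrt ν / 2)) ×ˢ
    (Icc (-ν ^ ((3 : ℝ) / 2)) (ν ^ ((3 : ℝ) / 2)) ×ˢ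
      Icc (-ν ^ ((3 : ℝ) / 2)) (ν ^ ((3 : ℝ) / 2)))

/-- There exists `ν₊ > 0` such that for every `ν ∈ (0, ν₊]` and every point of
`C_ν^{ct+}` (and likewise `C_ν^{ct−}`): on the face `y = ν^{3/2}` the second component
of `G_ν` is strictly positive, and on the face `y = −ν^{3/2}` it is strictly negative. -/
theorem stmt14 :
    ∃ νp : ℝ, 0 < νp ∧ ∀ ν ∈ Ioc (0 : ℝ) νp, ∀ p : ℝ × ℝ × ℝ,
      (p ∈ Cctp ν ∨ p ∈ Cctm ν) →
      (p.2.1 = ν ^ ((3 : ℝ) / 2) → 0 < (G ν p).2.1) ∧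
      (p.2.1 = -ν ^ ((3 : ℝ) / 2) → (G ν p).2.1 < 0) := by
  refine ⟨1/100, by norm_num, ?_⟩
  rintro ν ⟨hν0, hν1⟩ ⟨x, y, z⟩ hp
  set s := ν ^ ((3 : ℝ) / 2) with hsdef
  have hs0 : 0 < s := Real.rpow_pos_of_pos hν0 _
  have hs2 : s * s = ν ^ 3 := by
    rw [hsdef, ← Real.rpow_add hν0]
    norm_num
  have h2ν : Real.sqrt (2 * ν) ^ 2 = 2 * ν := Real.sq_sqrt (by linarith)
  simp only [Cctp, Cctm, mem_prod, mem_Icc] at hp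
  have hx2 : x ^ 2 ≤ 2 * ν := by
    rcases hp with ⟨⟨hxl, hxr⟩, _⟩ | ⟨⟨hxl, hxr⟩, _⟩ <;>
      nlinarith [Real.sqrt_nonneg ν, Real.sqrt_nonneg (2 * ν)]
  have hz : -s ≤ z ∧ z ≤ s := by
    rcases hp with ⟨_, _, hz1, hz2⟩ | ⟨_, _, hz1, hz2⟩ <;> exact ⟨hz1, hz2⟩
  have hslt : s < 1 := by nlinarith [sq_nonneg (s - 1), pow_le_pow_left₀ hν0.le hν1 3]
  have hkey : 4 * ν ^ 2 + ν ^ 3 < s := by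
    by_contra h
    push_neg at h
    have h1 : s * s ≤ (4 * ν ^ 2 + ν ^ 3) * (4 * ν ^ 2 + ν ^ 3) :=
      mul_le_mul h h hs0.le (by positivity)
    rw [hs2] at h1
    nlinarith [pow_pos hν0 3, pow_pos hν0 4, pow_pos hν0 5, sq_nonneg ν,
      mul_pos hν0 hν0, pow_le_pow_left₀ hν0.le hν1 3, pow_le_pow_left₀ hν0.le hν1 4,
      pow_le_pow_left₀ hν0.le hν1 5, pow_le_pow_left₀ hν0.le hν1 6]
  constructor
  · intro hy
    simp only [G] at hy ⊢
    subst hy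
    nlinarith [sq_nonneg x, sq_nonneg (x ^ 2),
      mul_nonneg (sq_nonneg x) (show (0 : ℝ) ≤ s + z by linarith [hz.1]),
      mul_le_mul_of_nonneg_left hz.1 hs0.le, mul_pos hs0 (show (0 : ℝ) < 1 - s by linarith)]
  · intro hy
    simp only [G] at hy ⊢
    subst hy
    have h1 : x ^ 2 * (-s + z) ≤ 0 :=
      mul_nonpos_of_nonneg_of_nonpos (sq_nonneg x) (by linarith [hz.2])
    have h2 : x ^ 4 ≤ 4 * ν ^ 2 := by nlinarith [sq_nonneg x]
    have h3 : -s * z ≤ ν ^ 3 := by nlinarith [mul_le_mul_of_nonneg_left hz.1 hs0.le]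
    nlinarith
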